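/- Let 0 < a < b be real numbers, μ ∈ ℝ, and σ > 0. Then there exists a constant C > 0 such that for all real x ≥ e, the integral g(x) = ∫_a^b exp(−(κ−μ)²/(2σ²)) · e^{−iκx} · e^{i (log x)/(2κ)} dκ satisfies |g(x)| ≤ C·(1 + log x)/x + C·(1 + log x)²/x². -/

import Mathlib

open MeasureTheory Real Complex intervalIntegral


open MeasureTheory Real Complex intervalIntegral

noncomputable def oscA (μ σ t : ℝ) : ℂ := ((Real.exp (-(t - μ) ^ 2 / (2 * σ ^ 2)) : ℝ) : ℂ)
noncomputable def oscA' (μ σ t : ℝ) : ℂ := ((-(t - μ) / σ ^ 2 : ℝ) : ℂ) * oscA μ σ t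
noncomputable def oscPhi (x L t : ℝ) : ℂ := -Complex.I * t * x + Complex.I * L / (2 * t)
noncomputable def oscD (x L t : ℝ) : ℂ := -Complex.I * x - Complex.I * L / (2 * t ^ 2)
noncomputable def oscD' (L t : ℝ) : ℂ := Complex.I * L / (t ^ 3)
noncomputable def oscG (μ σ x L t : ℝ) : ℂ := oscA μ σ t / oscD x L t
noncomputable def oscG' (μ σ x L t : ℝ) : ℂ :=
  (oscA' μ σ t * oscD x L t - oscA μ σ t * oscD' L t) / (oscD x L t) ^ 2
noncomputable def oscF (μ σ x L t : ℝ) : ℂ := oscG μ σ x L t * Complex.exp (oscPhi x L t)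

lemma oscD_eq (x L t : ℝ) : oscD x L t = -Complex.I * ((x + L / (2 * t ^ 2) : ℝ) : ℂ) := by
  unfold oscD; push_cast; ring

lemma oscD_abs (x L t : ℝ) (hx : 0 ≤ x) (hL : 0 ≤ L) (ht : 0 < t) :
    ‖oscD x L t‖ = x + L / (2 * t ^ 2) := by
  have h0 : (0:ℝ) ≤ x + L / (2 * t ^ 2) := by positivity
  rw [oscD_eq, norm_mul, Complex.norm_real, Real.norm_eq_abs, _root_.abs_of_nonneg h0]
  simp

lemma oscD_lb (x L t : ℝ) (hx : 0 ≤ x) (hL : 0 ≤ L) (ht : 0 < t) :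
    x ≤ ‖oscD x L t‖ := by
  rw [oscD_abs x L t hx hL ht]
  have : (0:ℝ) ≤ L / (2 * t ^ 2) := by positivity
  linarith

lemma oscD_ne (x L t : ℝ) (hx : 0 < x) (hL : 0 ≤ L) (ht : 0 < t) : oscD x L t ≠ 0 := by
  intro h
  have := oscD_lb x L t hx.le hL ht
  rw [h] at this
  simp at this
  linarith

lemma oscA_abs (μ σ t : ℝ) (hσ : 0 < σ) : ‖oscA μ σ t‖ ≤ 1 := by
  unfold oscA
  rw [Complex.norm_real, Real.norm_eq_abs, _root_.abs_of_nonneg (Real.exp_pos _).le, Real.exp_le_one_iff]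
  have h1 : (0:ℝ) ≤ (t - μ) ^ 2 := sq_nonneg _
  exact div_nonpos_of_nonpos_of_nonneg (by linarith) (by positivity)

lemma hasDerivAt_oscA (μ σ : ℝ) (hσ : 0 < σ) (t : ℝ) :
    HasDerivAt (oscA μ σ) (oscA' μ σ t) t := by
  have h1 : HasDerivAt (fun t : ℝ => -(t - μ) ^ 2 / (2 * σ ^ 2)) (-(t - μ) / σ ^ 2) t := by
    have := (((hasDerivAt_id t).sub_const μ).pow 2).neg.div_const (2 * σ ^ 2)
    refine this.congr_deriv ?_
    field_simp
    simp only [id]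
    ring
  have h2 := (h1.exp).ofReal_comp
  simp only [oscA, oscA']
  refine h2.congr_deriv ?_
  push_cast
  ring

lemma hasDerivAt_oscPhi (x L t : ℝ) (ht : 0 < t) :
    HasDerivAt (oscPhi x L) (oscD x L t) t := by
  have htne : (2 * (t : ℂ)) ≠ 0 := by
    simp only [ne_eq, mul_eq_zero]
    push_neg
    exact ⟨by norm_num, by exact_mod_cast ht.ne'⟩
  have h1 : HasDerivAt (fun s : ℝ => ((s : ℂ))) 1 t := (hasDerivAt_id t).ofReal_comp
  have h2 : HasDerivAt (fun s : ℝ => -Complex.I * s * x) (-Complex.I * x) t := by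
    have := (h1.const_mul (-Complex.I)).mul_const (x : ℂ)
    refine this.congr_deriv ?_
    ring
  have hden : HasDerivAt (fun s : ℝ => 2 * ((s : ℂ))) 2 t := by
    have := h1.const_mul (2 : ℂ)
    refine this.congr_deriv ?_
    ring
  have h4 := (hasDerivAt_const t (Complex.I * (L : ℂ))).div hden htne
  have h5 := h2.add h4
  unfold oscPhi oscD
  refine h5.congr_deriv ?_
  have htc : ((t : ℂ)) ≠ 0 := by exact_mod_cast ht.ne'
  field_simp
  ring

lemma hasDerivAt_oscD (x L t : ℝ) (ht : 0 < t) :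
    HasDerivAt (oscD x L) (oscD' L t) t := by
  have htc : ((t : ℂ)) ≠ 0 := by exact_mod_cast ht.ne'
  have htne : (2 * (t : ℂ) ^ 2) ≠ 0 := by
    simp only [ne_eq, mul_eq_zero, pow_eq_zero_iff (by norm_num : (2:ℕ) ≠ 0)]
    push_neg
    exact ⟨by norm_num, htc⟩
  have h1 : HasDerivAt (fun s : ℝ => ((s : ℂ))) 1 t := (hasDerivAt_id t).ofReal_comp
  have hden : HasDerivAt (fun s : ℝ => 2 * ((s : ℂ)) ^ 2) (4 * (t : ℂ)) t := by
    have h2 := (h1.mul h1).const_mul (2 : ℂ)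
    have heq : (fun s : ℝ => 2 * ((s : ℂ)) ^ 2) = fun s : ℝ => 2 * (((s : ℂ)) * ((s : ℂ))) := by
      funext s; ring
    rw [heq]
    refine h2.congr_deriv ?_
    ring
  have h4 := (hasDerivAt_const t (Complex.I * (L : ℂ))).div hden htne
  have h5 := (hasDerivAt_const t (-Complex.I * (x : ℂ))).sub h4
  unfold oscD oscD'
  refine h5.congr_deriv ?_
  field_simp
  ring

lemma hasDerivAt_oscG (μ σ x L t : ℝ) (hσ : 0 < σ) (hx : 0 < x) (hL : 0 ≤ L) (ht : 0 < t) :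
    HasDerivAt (oscG μ σ x L) (oscG' μ σ x L t) t :=
  (hasDerivAt_oscA μ σ hσ t).div (hasDerivAt_oscD x L t ht) (oscD_ne x L t hx hL ht)

lemma hasDerivAt_oscF (μ σ x L t : ℝ) (hσ : 0 < σ) (hx : 0 < x) (hL : 0 ≤ L) (ht : 0 < t) :
    HasDerivAt (oscF μ σ x L)
      (oscA μ σ t * Complex.exp (oscPhi x L t) + oscG' μ σ x L t * Complex.exp (oscPhi x L t))
      t := by
  have h1 := (hasDerivAt_oscG μ σ x L t hσ hx hL ht).mul ((hasDerivAt_oscPhi x L t ht).cexp)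
  unfold oscF at h1 ⊢
  refine h1.congr_deriv ?_
  have hGD : oscG μ σ x L t * oscD x L t = oscA μ σ t :=
    div_mul_cancel₀ _ (oscD_ne x L t hx hL ht)
  rw [← hGD]
  ring

lemma continuous_oscA (μ σ : ℝ) : Continuous (oscA μ σ) := by
  unfold oscA; fun_prop

lemma continuous_oscA' (μ σ : ℝ) : Continuous (oscA' μ σ) := by
  unfold oscA' oscA; fun_prop

lemma continuousOn_oscPhi (x L a b : ℝ) (ha : 0 < a) :
    ContinuousOn (oscPhi x L) (Set.Icc a b) := by
  unfold oscPhi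
  apply ContinuousOn.add (by fun_prop)
  apply ContinuousOn.div continuousOn_const (by fun_prop)
  intro t ht
  have htp : 0 < t := lt_of_lt_of_le ha ht.1
  simp only [ne_eq, mul_eq_zero]
  push_neg
  exact ⟨by norm_num, by exact_mod_cast htp.ne'⟩

lemma continuousOn_oscD (x L a b : ℝ) (ha : 0 < a) :
    ContinuousOn (oscD x L) (Set.Icc a b) := by
  unfold oscD
  apply ContinuousOn.sub continuousOn_const
  apply ContinuousOn.div continuousOn_const (by fun_prop)
  intro t ht
  have htp : 0 < t := lt_of_lt_of_le ha ht.1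
  have htc : ((t : ℂ)) ≠ 0 := by exact_mod_cast htp.ne'
  simp only [ne_eq, mul_eq_zero, pow_eq_zero_iff (by norm_num : (2:ℕ) ≠ 0)]
  push_neg
  exact ⟨by norm_num, htc⟩

lemma continuousOn_oscD' (L a b : ℝ) (ha : 0 < a) :
    ContinuousOn (oscD' L) (Set.Icc a b) := by
  unfold oscD'
  apply ContinuousOn.div continuousOn_const (by fun_prop)
  intro t ht
  have htp : 0 < t := lt_of_lt_of_le ha ht.1
  have htc : ((t : ℂ)) ≠ 0 := by exact_mod_cast htp.ne'
  exact pow_ne_zero 3 htc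

lemma continuousOn_oscG' (μ σ x L a b : ℝ) (ha : 0 < a) (hx : 0 < x) (hL : 0 ≤ L) :
    ContinuousOn (oscG' μ σ x L) (Set.Icc a b) := by
  unfold oscG'
  apply ContinuousOn.div
  · exact ((continuous_oscA' μ σ).continuousOn.mul (continuousOn_oscD x L a b ha)).sub
      ((continuous_oscA μ σ).continuousOn.mul (continuousOn_oscD' L a b ha))
  · exact (continuousOn_oscD x L a b ha).pow 2
  · intro t ht
    exact pow_ne_zero 2 (oscD_ne x L t hx hL (lt_of_lt_of_le ha ht.1))

lemma oscPhi_abs_exp (x L t : ℝ) (ht : 0 < t) :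
    ‖Complex.exp (oscPhi x L t)‖ = 1 := by
  have htc : ((t : ℂ)) ≠ 0 := by exact_mod_cast ht.ne'
  have hre : oscPhi x L t = (((-t * x + L / (2 * t)) : ℝ) : ℂ) * Complex.I := by
    unfold oscPhi
    push_cast
    field_simp
  rw [hre, Complex.norm_exp_ofReal_mul_I]

lemma oscF_abs (μ σ x L t : ℝ) (hσ : 0 < σ) (hx : 0 < x) (hL : 0 ≤ L) (ht : 0 < t) :
    ‖oscF μ σ x L t‖ ≤ 1 / x := by
  unfold oscF oscG
  rw [norm_mul, norm_div, oscPhi_abs_exp x L t ht, mul_one]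
  exact div_le_div₀ (by norm_num) (oscA_abs μ σ t hσ) hx (oscD_lb x L t hx.le hL ht)

/-- Stationary-phase / integration-by-parts bound for the oscillatory integral
`g(x) = ∫_a^b exp(−(κ−μ)²/(2σ²)) e^{−iκx} e^{i(log x)/(2κ)} dκ` for `x ≥ e`. -/
theorem oscillatory_integral_decay (a b μ σ : ℝ) (ha : 0 < a) (hab : a < b) (hσ : 0 < σ) :
    ∃ C : ℝ, 0 < C ∧ ∀ x : ℝ, Real.exp 1 ≤ x →
      ‖∫ κ in a..b,
          (Real.exp (-(κ - μ) ^ 2 / (2 * σ ^ 2)) : ℂ) *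
            Complex.exp (-Complex.I * κ * x) *
            Complex.exp (Complex.I * (Real.log x) / (2 * κ))‖ ≤
        C * (1 + Real.log x) / x + C * (1 + Real.log x) ^ 2 / x ^ 2 := by
  have hab' : a ≤ b := hab.le
  have hbpos : 0 < b := ha.trans hab
  have hK : (0:ℝ) < (b + |μ|) / σ ^ 2 + 1 := by
    have h1 : (0:ℝ) ≤ (b + |μ|) / σ ^ 2 :=
      div_nonneg (by linarith [abs_nonneg μ]) (by positivity)
    linarith
  obtain ⟨K, hKdef⟩ : ∃ K : ℝ, K = (b + |μ|) / σ ^ 2 + 1 := ⟨_, rfl⟩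
  rw [← hKdef] at hK
  have hC : (0:ℝ) < 2 + (b - a) * K + (b - a) / a ^ 3 + 1 := by
    have h1 : 0 < (b - a) * K := mul_pos (by linarith) hK
    have h2 : 0 < (b - a) / a ^ 3 := div_pos (by linarith) (by positivity)
    linarith
  refine ⟨2 + (b - a) * K + (b - a) / a ^ 3 + 1, hC, ?_⟩
  obtain ⟨C, hCdef⟩ : ∃ C : ℝ, C = 2 + (b - a) * K + (b - a) / a ^ 3 + 1 := ⟨_, rfl⟩
  rw [← hCdef] at hC ⊢
  intro x hx
  have hx1 : (1 : ℝ) < x := lt_of_lt_of_le (by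
    have := Real.add_one_le_exp (1 : ℝ); linarith) hx
  have hx0 : (0 : ℝ) < x := by linarith
  have hL1 : (1 : ℝ) ≤ Real.log x := by
    have := Real.log_le_log (Real.exp_pos 1) hx
    simpa using this
  obtain ⟨L, hLdef⟩ : ∃ L : ℝ, L = Real.log x := ⟨_, rfl⟩
  rw [← hLdef] at hL1 ⊢
  have hL0 : (0 : ℝ) < L := by linarith
  have huIcc : Set.uIcc a b = Set.Icc a b := Set.uIcc_of_le hab'
  have ht_pos : ∀ t ∈ Set.Icc a b, 0 < t := fun t ht => lt_of_lt_of_le ha ht.1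
  -- integrability
  have hcontExpPhi : ContinuousOn (fun t => Complex.exp (oscPhi x L t)) (Set.Icc a b) :=
    Complex.continuous_exp.comp_continuousOn (continuousOn_oscPhi x L a b ha)
  have hint1 : IntervalIntegrable (fun t => oscA μ σ t * Complex.exp (oscPhi x L t))
      volume a b := by
    apply ContinuousOn.intervalIntegrable
    rw [huIcc]
    exact (continuous_oscA μ σ).continuousOn.mul hcontExpPhi
  have hint2 : IntervalIntegrable (fun t => oscG' μ σ x L t * Complex.exp (oscPhi x L t))
      volume a b := by
    apply ContinuousOn.intervalIntegrable
    rw [huIcc]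
    exact (continuousOn_oscG' μ σ x L a b ha hx0 hL0.le).mul hcontExpPhi
  -- FTC
  have key : (∫ t in a..b, (oscA μ σ t * Complex.exp (oscPhi x L t) +
      oscG' μ σ x L t * Complex.exp (oscPhi x L t))) = oscF μ σ x L b - oscF μ σ x L a := by
    apply intervalIntegral.integral_eq_sub_of_hasDerivAt
    · intro t ht
      rw [huIcc] at ht
      exact hasDerivAt_oscF μ σ x L t hσ hx0 hL0.le (ht_pos t ht)
    · exact hint1.add hint2
  have hsplit : (∫ t in a..b, oscA μ σ t * Complex.exp (oscPhi x L t)) =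
      (oscF μ σ x L b - oscF μ σ x L a) -
        ∫ t in a..b, oscG' μ σ x L t * Complex.exp (oscPhi x L t) := by
    rw [← key, intervalIntegral.integral_add hint1 hint2]
    ring
  -- bounds on A' and D' over [a,b]
  have hA'abs : ∀ t ∈ Set.Icc a b, ‖oscA' μ σ t‖ ≤ K := by
    intro t ht
    have htp := ht_pos t ht
    rw [oscA', norm_mul, Complex.norm_real, Real.norm_eq_abs]
    have h1 : |(-(t - μ) / σ ^ 2)| ≤ (b + |μ|) / σ ^ 2 := by
      rw [abs_div, _root_.abs_of_pos (by positivity : (0:ℝ) < σ ^ 2)]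
      apply div_le_div_of_nonneg_right ?_ (by positivity)
      calc |(-(t - μ))| = |t - μ| := abs_neg _
        _ ≤ |t| + |μ| := abs_sub _ _
        _ ≤ b + |μ| := by
            rw [_root_.abs_of_pos htp]
            linarith [ht.2]
    calc |(-(t - μ) / σ ^ 2)| * ‖oscA μ σ t‖
        ≤ ((b + |μ|) / σ ^ 2) * 1 :=
          mul_le_mul h1 (oscA_abs μ σ t hσ) (norm_nonneg _) (by positivity)
      _ ≤ K := by rw [hKdef]; linarith
  have hD'abs : ∀ t ∈ Set.Icc a b, ‖oscD' L t‖ ≤ L / a ^ 3 := by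
    intro t ht
    have htp := ht_pos t ht
    rw [oscD', norm_div, norm_mul, Complex.norm_I, one_mul, Complex.norm_real, Real.norm_eq_abs, norm_pow,
      Complex.norm_real, Real.norm_eq_abs, _root_.abs_of_pos hL0, _root_.abs_of_pos htp]
    apply div_le_div_of_nonneg_left hL0.le (by positivity)
    gcongr
    exact ht.1
  -- |G'| bound
  have hG'abs : ∀ t ∈ Set.Icc a b,
      ‖oscG' μ σ x L t‖ ≤ K / x + (L / a ^ 3) / x ^ 2 := by
    intro t ht
    have htp := ht_pos t ht
    have hd := oscD_lb x L t hx0.le hL0.le htp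
    have hdpos : 0 < ‖oscD x L t‖ := lt_of_lt_of_le hx0 hd
    rw [oscG', norm_div, norm_pow]
    have hnum : ‖oscA' μ σ t * oscD x L t - oscA μ σ t * oscD' L t‖ ≤
        K * ‖oscD x L t‖ + L / a ^ 3 := by
      calc ‖oscA' μ σ t * oscD x L t - oscA μ σ t * oscD' L t‖
          ≤ ‖oscA' μ σ t * oscD x L t‖ + ‖oscA μ σ t * oscD' L t‖ :=
            norm_sub_le _ _
        _ = ‖oscA' μ σ t‖ * ‖oscD x L t‖ +
            ‖oscA μ σ t‖ * ‖oscD' L t‖ := by rw [norm_mul, norm_mul]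
        _ ≤ K * ‖oscD x L t‖ + 1 * (L / a ^ 3) :=
            add_le_add
              (mul_le_mul_of_nonneg_right (hA'abs t ht) (norm_nonneg _))
              (mul_le_mul (oscA_abs μ σ t hσ) (hD'abs t ht) (norm_nonneg _) one_pos.le)
        _ = K * ‖oscD x L t‖ + L / a ^ 3 := by ring
    calc ‖oscA' μ σ t * oscD x L t - oscA μ σ t * oscD' L t‖ /
        ‖oscD x L t‖ ^ 2
        ≤ (K * ‖oscD x L t‖ + L / a ^ 3) / ‖oscD x L t‖ ^ 2 := by
          gcongr
      _ = K / ‖oscD x L t‖ + (L / a ^ 3) / ‖oscD x L t‖ ^ 2 := by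
          field_simp
      _ ≤ K / x + (L / a ^ 3) / x ^ 2 := by
          gcongr
  -- remainder bound
  have hrem : ‖∫ t in a..b, oscG' μ σ x L t * Complex.exp (oscPhi x L t)‖ ≤
      (K / x + (L / a ^ 3) / x ^ 2) * (b - a) := by
    have hb := intervalIntegral.norm_integral_le_of_norm_le_const
      (a := a) (b := b) (C := K / x + (L / a ^ 3) / x ^ 2)
      (f := fun t => oscG' μ σ x L t * Complex.exp (oscPhi x L t)) ?_
    · rwa [_root_.abs_of_nonneg (by linarith : (0:ℝ) ≤ b - a)] at hb
    · intro t ht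
      rw [Set.uIoc_of_le hab'] at ht
      have ht' : t ∈ Set.Icc a b := ⟨ht.1.le, ht.2⟩
      rw [norm_mul, oscPhi_abs_exp x L t (ht_pos t ht'), mul_one]
      exact hG'abs t ht'
  -- rewrite goal
  have hgoal_eq : (∫ κ in a..b,
      (Real.exp (-(κ - μ) ^ 2 / (2 * σ ^ 2)) : ℂ) *
        Complex.exp (-Complex.I * κ * x) *
        Complex.exp (Complex.I * L / (2 * κ))) =
      ∫ t in a..b, oscA μ σ t * Complex.exp (oscPhi x L t) := by
    apply intervalIntegral.integral_congr
    intro t _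
    simp only [oscA, oscPhi]
    rw [mul_assoc, ← Complex.exp_add]
  rw [hgoal_eq, hsplit]
  -- final bound
  have hFa := oscF_abs μ σ x L a hσ hx0 hL0.le ha
  have hFb := oscF_abs μ σ x L b hσ hx0 hL0.le hbpos
  have htot : ‖(oscF μ σ x L b - oscF μ σ x L a) -
      ∫ t in a..b, oscG' μ σ x L t * Complex.exp (oscPhi x L t)‖ ≤
      1 / x + 1 / x + (K / x + (L / a ^ 3) / x ^ 2) * (b - a) := by
    calc ‖(oscF μ σ x L b - oscF μ σ x L a) -
        ∫ t in a..b, oscG' μ σ x L t * Complex.exp (oscPhi x L t)‖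
        ≤ ‖oscF μ σ x L b - oscF μ σ x L a‖ +
          ‖∫ t in a..b, oscG' μ σ x L t * Complex.exp (oscPhi x L t)‖ :=
            norm_sub_le _ _
      _ ≤ (‖oscF μ σ x L b‖ + ‖oscF μ σ x L a‖) +
          (K / x + (L / a ^ 3) / x ^ 2) * (b - a) :=
            add_le_add (norm_sub_le _ _) hrem
      _ ≤ 1 / x + 1 / x + (K / x + (L / a ^ 3) / x ^ 2) * (b - a) := by linarith
  refine le_trans htot ?_
  have heq : 1 / x + 1 / x + (K / x + (L / a ^ 3) / x ^ 2) * (b - a) =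
      (2 + (b - a) * K) / x + ((b - a) / a ^ 3 * L) / x ^ 2 := by
    field_simp
    ring
  rw [heq]
  have h1 : (2 + (b - a) * K) / x ≤ C * (1 + L) / x := by
    gcongr
    have hc1 : C ≤ C * (1 + L) := le_mul_of_one_le_right hC.le (by linarith)
    have hc2 : 2 + (b - a) * K ≤ C := by
      have h2 : 0 < (b - a) / a ^ 3 := div_pos (by linarith) (by positivity)
      rw [hCdef]; linarith
    linarith
  have h2 : ((b - a) / a ^ 3 * L) / x ^ 2 ≤ C * (1 + L) ^ 2 / x ^ 2 := by
    have hc2 : (b - a) / a ^ 3 ≤ C := by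
      have h3 : 0 < (b - a) * K := mul_pos (by linarith) hK
      rw [hCdef]; linarith
    have hL2 : L ≤ (1 + L) ^ 2 := by nlinarith
    have hmain : (b - a) / a ^ 3 * L ≤ C * (1 + L) ^ 2 :=
      calc (b - a) / a ^ 3 * L ≤ C * L := mul_le_mul_of_nonneg_right hc2 hL0.le
        _ ≤ C * (1 + L) ^ 2 := mul_le_mul_of_nonneg_left hL2 hC.le
    gcongr
  linarith
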